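/- There exists {c_k}_{k∈ℤ} such that the one-sided sequence supported on k ≤ 0 fails GM-bar, the one-sided sequence supported on k ≥ 0 satisfies GM-bar, and the full two-sided sequence {c_k}_{k∈ℤ} satisfies GM-bar. Concretely: c_k = (2/3)^n for 2^n ≤ k < 2^{n+1} (n ≥ 0); c_{−2^n} = (2/3)^n (n ≥ 0); c_k = 0 for −2^{n+1} < k < −2^n and for k = 0. Then {c_k}_{k≤0} ∉ GM-bar while {c_k}_{k∈ℤ} ∈ GM-bar. -/

import Mathlib

open scoped ENNReal BigOperators

/-- The symmetric difference `|Δa_m|`. -/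
noncomputable def symDiff (a : ℤ → ℂ) (m : ℤ) : ℝ :=
  if 0 < m then ‖a m - a (m + 1)‖
  else if m < 0 then ‖a m - a (m - 1)‖
  else ‖a 0 - a 1‖ + ‖a 0 - a (-1)‖

/-- `⌊2^{k-1}⌋`. -/
def dyadLo (k : ℕ) : ℤ := if k = 0 then 0 else 2 ^ (k - 1)

/-- `Θ_n(a) = ∑_{⌊2^{n-1}⌋ ≤ |m| < 2^n} |Δa_m|`. -/
noncomputable def Theta (a : ℤ → ℂ) (k : ℕ) : ℝ :=
  ∑ m ∈ (Finset.Icc (-(2 ^ k : ℤ) + 1) ((2 ^ k : ℤ) - 1)).filter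
      (fun m => dyadLo k ≤ |m|), symDiff a m

/-- The partial sum `∑_{j=0}^{m} a_j`, interpreted as `∑_{j=m}^{0} a_j`
when `m < 0`. -/
noncomputable def psum (a : ℤ → ℂ) (m : ℤ) : ℂ :=
  ∑ j ∈ Finset.Icc (min m 0) (max m 0), a j

/-- `â_{2^k} = sup_{2^k ≤ |m| < 2^{k+1}} (1/(|m|+1)) |∑_{j=0}^{m} a_j|`. -/
noncomputable def hatAvg (a : ℤ → ℂ) (k : ℕ) : ℝ≥0∞ :=
  ⨆ (m : ℤ) (_ : (2 ^ k : ℤ) ≤ |m| ∧ |m| < 2 ^ (k + 1)),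
    ENNReal.ofReal (‖psum a m‖ / ((m.natAbs : ℝ) + 1))

/-- The class `GM-bar` with constant `C`: for every `n ≥ 0`,
`∑_{⌊2^{n-1}⌋ ≤ |m| < 2^n} |Δa_m| ≤ C · sup_{k≥0} min(1, 2^{k-n}) â_{2^k}`. -/
def GMBarWith (C : ℝ) (a : ℤ → ℂ) : Prop :=
  ∀ n : ℕ, ENNReal.ofReal (Theta a n) ≤
    ENNReal.ofReal C *
      ⨆ k : ℕ, min 1 ((2 : ℝ≥0∞) ^ ((k : ℝ) - (n : ℝ))) * hatAvg a k

/-- The class `GM-bar`. -/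
def GMBar (a : ℤ → ℂ) : Prop := ∃ C : ℝ, 0 < C ∧ GMBarWith C a

/-- `c_k = (2/3)^n` for `2^n ≤ k < 2^{n+1}` (`n ≥ 0`); `c_{-2^n} = (2/3)^n`
(`n ≥ 0`); `c_k = 0` for `-2^{n+1} < k < -2^n` and for `k = 0`. -/
noncomputable def cTwoSided : ℤ → ℂ := fun k =>
  if 0 < k then ((2 / 3 : ℂ)) ^ (Nat.log 2 k.toNat)
  else if k = 0 then 0
  else if (2 : ℕ) ^ (Nat.log 2 (-k).toNat) = (-k).toNat then
    ((2 / 3 : ℂ)) ^ (Nat.log 2 (-k).toNat)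
  else 0

/-! ### Auxiliary definitions and lemmas -/

/-- Real-valued version of `cTwoSided`. -/
noncomputable def rr : ℤ → ℝ := fun k =>
  if 0 < k then ((2 / 3 : ℝ)) ^ (Nat.log 2 k.toNat)
  else if k = 0 then 0
  else if (2 : ℕ) ^ (Nat.log 2 (-k).toNat) = (-k).toNat then
    ((2 / 3 : ℝ)) ^ (Nat.log 2 (-k).toNat)
  else 0

noncomputable def cplx (s : ℤ → ℝ) : ℤ → ℂ := fun k => ((s k : ℝ) : ℂ)

noncomputable def sPos : ℤ → ℝ := fun j => if 0 ≤ j then rr j else 0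
noncomputable def sNeg : ℤ → ℝ := fun j => if j ≤ 0 then rr j else 0

lemma c_eq (k : ℤ) : cTwoSided k = ((rr k : ℝ) : ℂ) := by
  unfold cTwoSided rr
  split_ifs <;> push_cast <;> ring

lemma rr_nonneg (k : ℤ) : 0 ≤ rr k := by
  unfold rr; split_ifs <;> positivity

lemma rr_zero : rr 0 = 0 := by simp [rr]

lemma cast_pow_int (n : ℕ) : ((2 ^ n : ℕ) : ℤ) = 2 ^ n := by push_cast; ring

lemma rr_pos_val (n : ℕ) (k : ℤ) (h1 : 2 ^ n ≤ k) (h2 : k < 2 ^ (n + 1)) :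
    rr k = (2 / 3 : ℝ) ^ n := by
  have e1 := cast_pow_int n
  have e2 := cast_pow_int (n + 1)
  have hk : 0 < k := lt_of_lt_of_le (by positivity) h1
  have h1' : (2 : ℕ) ^ n ≤ k.toNat := by omega
  have h2' : k.toNat < 2 ^ (n + 1) := by omega
  rw [rr]
  simp only [hk, if_pos]
  rw [Nat.log_eq_of_pow_le_of_lt_pow h1' h2']

lemma rr_neg_pow (n : ℕ) : rr (-(2 ^ n)) = (2 / 3 : ℝ) ^ n := by
  have e1 := cast_pow_int n
  have h0 : ¬ (0 : ℤ) < -(2 ^ n) := by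
    have : (0:ℤ) < 2 ^ n := by positivity
    omega
  have hne : (-(2 ^ n) : ℤ) ≠ 0 := by
    have : (0:ℤ) < 2 ^ n := by positivity
    omega
  have htn : (-(-(2 ^ n) : ℤ)).toNat = 2 ^ n := by
    have : (0:ℤ) < 2 ^ n := by positivity
    omega
  rw [rr]
  simp only [h0, if_neg, hne, if_neg, htn, Nat.log_pow (by norm_num : 1 < 2), if_pos rfl]
  simp [htn]

lemma rr_neg_zero (n : ℕ) (k : ℤ) (h1 : -(2 ^ (n + 1)) < k) (h2 : k < -(2 ^ n)) :
    rr k = 0 := by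
  have e1 := cast_pow_int n
  have e2 := cast_pow_int (n + 1)
  have hk : k < 0 := by
    have : (0:ℤ) < 2 ^ n := by positivity
    omega
  have h0 : ¬ (0 : ℤ) < k := by omega
  have hne : k ≠ 0 := by omega
  have h1' : (2 : ℕ) ^ n ≤ (-k).toNat := by omega
  have h2' : (-k).toNat < 2 ^ (n + 1) := by omega
  have hlog : Nat.log 2 (-k).toNat = n := Nat.log_eq_of_pow_le_of_lt_pow h1' h2'
  have hnp : (2 : ℕ) ^ (Nat.log 2 (-k).toNat) ≠ (-k).toNat := by
    rw [hlog]; omega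
  rw [rr]
  simp [hne, hnp, h0]

lemma rr_neg_pow_case (k : ℤ) (hk : k < 0)
    (hp : (2 : ℕ) ^ (Nat.log 2 (-k).toNat) = (-k).toNat) :
    rr k = (2/3:ℝ) ^ (Nat.log 2 (-k).toNat) := by
  rw [rr]
  simp [hk.ne, not_lt.mpr hk.le, hp]

/-! ### symDiff lemmas -/

lemma symDiff_cplx_pos (s : ℤ → ℝ) (m : ℤ) (h : 0 < m) :
    symDiff (cplx s) m = |s m - s (m + 1)| := by
  simp [symDiff, h, cplx, ← Complex.ofReal_sub, Complex.norm_real]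

lemma symDiff_cplx_neg (s : ℤ → ℝ) (m : ℤ) (h : m < 0) :
    symDiff (cplx s) m = |s m - s (m - 1)| := by
  simp [symDiff, h, not_lt_of_gt h, cplx, ← Complex.ofReal_sub, Complex.norm_real]

lemma symDiff_cplx_zero (s : ℤ → ℝ) :
    symDiff (cplx s) 0 = |s 0 - s 1| + |s 0 - s (-1)| := by
  simp [symDiff, cplx, ← Complex.ofReal_sub, Complex.norm_real]

lemma symDiff_nonneg (a : ℤ → ℂ) (m : ℤ) : 0 ≤ symDiff a m := by
  unfold symDiff; split_ifs <;> positivity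

/-! ### Theta lemmas -/

lemma mem_S (n : ℕ) (m : ℤ) :
    m ∈ (Finset.Icc (-(2 ^ n : ℤ) + 1) ((2 ^ n : ℤ) - 1)).filter
      (fun m => dyadLo n ≤ |m|) ↔ (dyadLo n ≤ |m| ∧ |m| < 2 ^ n) := by
  simp only [Finset.mem_filter, Finset.mem_Icc]
  rw [abs_lt]
  omega

lemma Theta_sum_T (a : ℤ → ℂ) (n : ℕ) (T : Finset ℤ)
    (hT : ∀ m ∈ T, dyadLo n ≤ |m| ∧ |m| < 2 ^ n)
    (hz : ∀ m : ℤ, dyadLo n ≤ |m| → |m| < 2 ^ n → m ∉ T → symDiff a m = 0) :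
    Theta a n = ∑ m ∈ T, symDiff a m := by
  refine (Finset.sum_subset (fun x hx => ?_) (fun x hx hxt => ?_)).symm
  · rw [mem_S]; exact hT x hx
  · rw [mem_S] at hx; exact hz x hx.1 hx.2 hxt

lemma Theta_zero (a : ℤ → ℂ) : Theta a 0 = symDiff a 0 := by
  have h : (Finset.Icc (-(2 ^ 0 : ℤ) + 1) ((2 ^ 0 : ℤ) - 1)).filter
      (fun m => dyadLo 0 ≤ |m|) = {0} := by
    ext m
    rw [mem_S]
    simp [dyadLo]
  rw [Theta, h, Finset.sum_singleton]

lemma dyadLo_succ (N : ℕ) : dyadLo (N + 1) = 2 ^ N := by simp [dyadLo]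

lemma symDiff_pos_interior (s : ℤ → ℝ) (hs : ∀ j : ℤ, 0 < j → s j = rr j)
    (N : ℕ) (m : ℤ) (hm1 : 2 ^ N ≤ m) (hm2 : m < 2 ^ (N + 1) - 1) :
    symDiff (cplx s) m = 0 := by
  have hp : (0:ℤ) < 2 ^ N := by positivity
  have h0 : 0 < m := lt_of_lt_of_le hp hm1
  rw [symDiff_cplx_pos s m h0, hs m h0, hs (m+1) (by omega),
    rr_pos_val N m hm1 (by omega), rr_pos_val N (m+1) (by omega) (by omega)]
  simp

lemma symDiff_top (s : ℤ → ℝ) (hs : ∀ j : ℤ, 0 < j → s j = rr j) (N : ℕ) :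
    symDiff (cplx s) (2 ^ (N + 1) - 1) = (2/3:ℝ)^N / 3 := by
  have hp : (0:ℤ) < 2 ^ (N+1) := by positivity
  have hp' : (0:ℤ) < 2 ^ N := by positivity
  have e : (2:ℤ)^(N+1) = 2^N * 2 := by rw [pow_succ]
  rw [symDiff_cplx_pos _ _ (by omega)]
  rw [hs _ (by omega), hs _ (by omega)]
  rw [show (2:ℤ) ^ (N + 1) - 1 + 1 = 2 ^ (N+1) by ring]
  rw [rr_pos_val N _ (by omega) (by omega),
    rr_pos_val (N+1) _ le_rfl (by rw [pow_succ (2:ℤ) (N+1)]; omega)]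
  rw [show (2/3:ℝ)^N - (2/3)^(N+1) = (2/3)^N/3 by ring]
  rw [abs_of_nonneg (by positivity)]

lemma rr_one : rr 1 = 1 := by
  rw [show (1:ℤ) = 2^0 by norm_num, rr_pos_val 0 _ (by norm_num) (by norm_num)]
  norm_num

lemma rr_two : rr 2 = 2/3 := by
  rw [show (2:ℤ) = 2^1 by norm_num, rr_pos_val 1 _ (by norm_num) (by norm_num)]
  norm_num

lemma rr_neg_one : rr (-1) = 1 := by
  have := rr_neg_pow 0
  norm_num at this
  exact this

lemma rr_neg_two : rr (-2) = 2/3 := by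
  have := rr_neg_pow 1
  norm_num at this
  exact this

lemma Theta_aPos_zero : Theta (cplx sPos) 0 = 1 := by
  rw [Theta_zero, symDiff_cplx_zero]
  have h0 : sPos 0 = 0 := by rw [sPos]; simp [rr_zero]
  have h1 : sPos 1 = 1 := by
    rw [sPos]; norm_num [rr_one]
  have h2 : sPos (-1) = 0 := by rw [sPos]; norm_num
  rw [h0, h1, h2]
  norm_num

lemma Theta_aPos_succ (N : ℕ) : Theta (cplx sPos) (N + 1) = (2/3:ℝ)^N / 3 := by
  have hp : (0:ℤ) < 2 ^ N := by positivity
  have e : (2:ℤ)^(N+1) = 2^N * 2 := by rw [pow_succ]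
  have hsp : ∀ j : ℤ, 0 < j → sPos j = rr j := fun j hj => by
    rw [sPos]; simp [hj.le]
  rw [Theta_sum_T (cplx sPos) (N+1) {2 ^ (N+1) - 1} ?hT ?hz, Finset.sum_singleton,
    symDiff_top sPos hsp]
  case hT =>
    intro m hm
    rw [Finset.mem_singleton] at hm
    subst hm
    rw [dyadLo_succ, abs_of_nonneg (by omega)]
    omega
  case hz =>
    intro m h1 h2 hm
    rw [Finset.mem_singleton] at hm
    rw [dyadLo_succ] at h1
    rcases lt_trichotomy m 0 with hneg | h0 | hpos
    · rw [symDiff_cplx_neg _ _ hneg]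
      rw [show sPos m = 0 by rw [sPos]; simp [not_le.mpr hneg],
        show sPos (m-1) = 0 by rw [sPos]; simp [not_le.mpr (by omega : m - 1 < 0)]; intro h; omega]
      simp
    · subst h0; simp at h1; omega
    · rw [abs_of_nonneg hpos.le] at h1 h2
      exact symDiff_pos_interior sPos hsp N m h1 (by omega)

lemma Theta_full_zero : Theta (cplx rr) 0 = 2 := by
  rw [Theta_zero, symDiff_cplx_zero, rr_zero, rr_one, rr_neg_one]
  norm_num

lemma Theta_full_one : Theta (cplx rr) 1 = 2/3 := by
  have hT : ∀ m ∈ ({-1, 1} : Finset ℤ), dyadLo 1 ≤ |m| ∧ |m| < 2 ^ 1 := by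
    intro m hm
    simp only [Finset.mem_insert, Finset.mem_singleton] at hm
    rcases hm with h | h <;> subst h <;> simp [dyadLo]
  have hz : ∀ m : ℤ, dyadLo 1 ≤ |m| → |m| < 2 ^ 1 → m ∉ ({-1, 1} : Finset ℤ) →
      symDiff (cplx rr) m = 0 := by
    intro m h1 h2 hm
    exfalso
    simp only [Finset.mem_insert, Finset.mem_singleton] at hm
    simp only [dyadLo] at h1
    norm_num at h1
    rcases le_or_gt 0 m with h | h
    · rw [abs_of_nonneg h] at h1 h2; omega
    · rw [abs_of_neg h] at h1 h2; omega
  rw [Theta_sum_T (cplx rr) 1 {-1, 1} hT hz]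
  rw [Finset.sum_insert (by norm_num), Finset.sum_singleton]
  rw [symDiff_cplx_neg _ _ (by norm_num), symDiff_cplx_pos _ _ (by norm_num)]
  norm_num [rr_neg_one, rr_neg_two, rr_one, rr_two]

lemma Theta_full_succ (N : ℕ) :
    Theta (cplx rr) (N + 2) = 2 * (2/3:ℝ)^(N+1) := by
  have hp1 : (0:ℤ) < 2 ^ (N+1) := by positivity
  have e : (2:ℤ)^(N+2) = 2^(N+1) * 2 := by rw [pow_succ]
  have hp2 : (0:ℤ) < 2 ^ (N+2) := by positivity
  have hrr : ∀ j : ℤ, 0 < j → rr j = rr j := fun _ _ => rfl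
  set T : Finset ℤ := {-(2^(N+2)) + 1, -(2^(N+1)), 2^(N+2) - 1} with hTdef
  have hmem : ∀ m ∈ T, dyadLo (N+2) ≤ |m| ∧ |m| < 2 ^ (N+2) := by
    intro m hm
    rw [hTdef] at hm
    simp only [Finset.mem_insert, Finset.mem_singleton] at hm
    rw [dyadLo_succ]
    rcases hm with h | h | h <;> subst h
    · rw [abs_of_neg (by omega)]; omega
    · rw [abs_of_neg (by omega)]; omega
    · rw [abs_of_nonneg (by omega)]; omega
  have hz : ∀ m : ℤ, dyadLo (N+2) ≤ |m| → |m| < 2 ^ (N+2) → m ∉ T →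
      symDiff (cplx rr) m = 0 := by
    intro m h1 h2 hm
    rw [hTdef] at hm
    simp only [Finset.mem_insert, Finset.mem_singleton] at hm
    rw [dyadLo_succ] at h1
    rcases lt_trichotomy m 0 with hneg | h0 | hpos
    · rw [abs_of_neg hneg] at h1 h2
      rw [symDiff_cplx_neg _ _ hneg]
      rw [rr_neg_zero (N+1) m (by omega) (by omega),
        rr_neg_zero (N+1) (m-1) (by omega) (by omega)]
      simp
    · subst h0; simp at h1; omega
    · rw [abs_of_nonneg hpos.le] at h1 h2
      exact symDiff_pos_interior rr hrr (N+1) m h1 (by omega)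
  rw [Theta_sum_T (cplx rr) (N+2) T hmem hz, hTdef]
  rw [Finset.sum_insert (by
      simp only [Finset.mem_insert, Finset.mem_singleton]
      push_neg
      constructor <;> omega),
    Finset.sum_insert (by
      simp only [Finset.mem_singleton]
      omega),
    Finset.sum_singleton]

  have hA : symDiff (cplx rr) (-(2^(N+2)) + 1) = (2/3:ℝ)^(N+2) := by
    rw [symDiff_cplx_neg _ _ (by omega)]
    rw [show -(2^(N+2):ℤ) + 1 - 1 = -(2^(N+2)) by ring]
    rw [rr_neg_zero (N+1) _ (by omega) (by omega), rr_neg_pow (N+2)]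
    rw [zero_sub, abs_neg, abs_of_nonneg (by positivity)]
  have hB : symDiff (cplx rr) (-(2^(N+1))) = (2/3:ℝ)^(N+1) := by
    rw [symDiff_cplx_neg _ _ (by omega)]
    rw [rr_neg_pow (N+1), rr_neg_zero (N+1) _ (by omega) (by omega)]
    rw [sub_zero, abs_of_nonneg (by positivity)]
  have hC : symDiff (cplx rr) (2^(N+2) - 1) = (2/3:ℝ)^(N+1) / 3 :=
    symDiff_top rr hrr (N+1)
  rw [hA, hB, hC]
  ring

lemma Theta_neg_low (N : ℕ) :
    (2/3:ℝ)^(N+1) ≤ Theta (cplx sNeg) (N + 2) := by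
  have hp1 : (0:ℤ) < 2 ^ (N+1) := by positivity
  have e : (2:ℤ)^(N+2) = 2^(N+1) * 2 := by rw [pow_succ]
  have hmem : -(2^(N+1) : ℤ) ∈ (Finset.Icc (-(2 ^ (N+2) : ℤ) + 1) ((2 ^ (N+2) : ℤ) - 1)).filter
      (fun m => dyadLo (N+2) ≤ |m|) := by
    rw [mem_S, dyadLo_succ, abs_of_neg (by omega)]
    omega
  have hval : symDiff (cplx sNeg) (-(2^(N+1))) = (2/3:ℝ)^(N+1) := by
    rw [symDiff_cplx_neg _ _ (by omega)]
    rw [show sNeg (-(2^(N+1))) = rr (-(2^(N+1))) by rw [sNeg]; simp only [if_pos (by omega : -(2^(N+1):ℤ) ≤ 0)],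
      show sNeg (-(2^(N+1)) - 1) = rr (-(2^(N+1)) - 1) by rw [sNeg]; simp only [if_pos (by omega : -(2^(N+1):ℤ) - 1 ≤ 0)]]
    rw [rr_neg_pow (N+1), rr_neg_zero (N+1) _ (by omega) (by omega)]
    rw [sub_zero, abs_of_nonneg (by positivity)]
  calc (2/3:ℝ)^(N+1) = symDiff (cplx sNeg) (-(2^(N+1))) := hval.symm
    _ ≤ Theta (cplx sNeg) (N + 2) :=
        Finset.single_le_sum (fun m _ => symDiff_nonneg (cplx sNeg) m) hmem

/-! ### psum and hatAvg lemmas -/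

lemma norm_psum_cplx (s : ℤ → ℝ) (m : ℤ) :
    ‖psum (cplx s) m‖ = |∑ j ∈ Finset.Icc (min m 0) (max m 0), s j| := by
  rw [show psum (cplx s) m = ((∑ j ∈ Finset.Icc (min m 0) (max m 0), s j : ℝ) : ℂ) by
    rw [psum]; push_cast [cplx]; rfl, Complex.norm_real, Real.norm_eq_abs]

lemma psum_block_low (s : ℤ → ℝ) (hs0 : ∀ j, 0 ≤ s j) (n : ℕ)
    (hblock : ∀ j : ℤ, (2:ℤ)^n ≤ j → j ≤ 2^(n+1) - 1 → s j = (2/3:ℝ)^n) :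
    (2:ℝ)^n * (2/3)^n ≤ ‖psum (cplx s) (2^(n+1) - 1)‖ := by
  have hpos : (0:ℤ) < 2^n := by positivity
  have hmin : min ((2:ℤ)^(n+1) - 1) 0 = 0 := by
    rw [min_eq_right]; have : (0:ℤ) < 2^(n+1) := by positivity
    omega
  have hmax : max ((2:ℤ)^(n+1) - 1) 0 = (2:ℤ)^(n+1) - 1 := by
    rw [max_eq_left]; have : (0:ℤ) < 2^(n+1) := by positivity
    omega
  rw [norm_psum_cplx, hmin, hmax]
  have hsub : Finset.Icc ((2:ℤ)^n) (2^(n+1) - 1) ⊆ Finset.Icc (0:ℤ) (2^(n+1) - 1) :=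
    Finset.Icc_subset_Icc (le_of_lt hpos) le_rfl
  have h1 : ∑ j ∈ Finset.Icc ((2:ℤ)^n) (2^(n+1) - 1), s j
      ≤ ∑ j ∈ Finset.Icc (0:ℤ) (2^(n+1) - 1), s j :=
    Finset.sum_le_sum_of_subset_of_nonneg hsub (fun j _ _ => hs0 j)
  have hc : ∑ j ∈ Finset.Icc ((2:ℤ)^n) (2^(n+1) - 1), s j
      = ∑ _j ∈ Finset.Icc ((2:ℤ)^n) (2^(n+1) - 1), (2/3:ℝ)^n :=
    Finset.sum_congr rfl (fun j hj => hblock j (Finset.mem_Icc.mp hj).1 (Finset.mem_Icc.mp hj).2)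
  have h2 : ∑ j ∈ Finset.Icc ((2:ℤ)^n) (2^(n+1) - 1), s j = (2:ℝ)^n * (2/3)^n := by
    rw [hc, Finset.sum_const, Int.card_Icc]
    have hcast : ((2:ℤ)^(n+1) - 1 + 1 - 2^n).toNat = 2^n := by
      have e : (2:ℤ)^(n+1) = 2^n * 2 := by rw [pow_succ]
      have e2 : ((2^n : ℕ) : ℤ) = 2^n := by push_cast; ring
      omega
    rw [hcast, nsmul_eq_mul]
    push_cast; ring
  calc (2:ℝ)^n * (2/3)^n = ∑ j ∈ Finset.Icc ((2:ℤ)^n) (2^(n+1) - 1), s j := h2.symm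
    _ ≤ ∑ j ∈ Finset.Icc (0:ℤ) (2^(n+1) - 1), s j := h1
    _ ≤ |∑ j ∈ Finset.Icc (0:ℤ) (2^(n+1) - 1), s j| := le_abs_self _

lemma hatAvg_low (s : ℤ → ℝ) (hs0 : ∀ j, 0 ≤ s j) (n : ℕ)
    (hblock : ∀ j : ℤ, (2:ℤ)^n ≤ j → j ≤ 2^(n+1) - 1 → s j = (2/3:ℝ)^n) :
    ENNReal.ofReal ((2/3:ℝ)^n / 2) ≤ hatAvg (cplx s) n := by
  have hm : ((2:ℤ)^n ≤ |(2^(n+1) - 1 : ℤ)| ∧ |(2^(n+1) - 1 : ℤ)| < 2^(n+1)) := by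
    have h1 : (0:ℤ) < 2^n := by positivity
    have e : (2:ℤ)^(n+1) = 2^n * 2 := by rw [pow_succ]
    rw [abs_of_nonneg (by omega)]
    omega
  refine le_trans ?_ (le_iSup₂ ((2:ℤ)^(n+1) - 1) hm)
  apply ENNReal.ofReal_le_ofReal
  have hz : (0:ℤ) < 2^(n+1) := by positivity
  have h1 : ((((2:ℤ)^(n+1) - 1).natAbs : ℤ)) = 2^(n+1) - 1 := by omega
  have hnat : ((((2:ℤ)^(n+1) - 1).natAbs : ℕ) : ℝ) = (2:ℝ)^(n+1) - 1 := by
    rw [Nat.cast_natAbs]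
    push_cast
    rw [abs_of_nonneg]
    have : (1:ℝ) ≤ 2^(n+1) := one_le_pow₀ (by norm_num)
    linarith
  rw [hnat]
  rw [show (2:ℝ)^(n+1) - 1 + 1 = 2^(n+1) by ring]
  have hlow := psum_block_low s hs0 n hblock
  calc (2/3:ℝ)^n / 2 = (2:ℝ)^n * (2/3)^n / 2^(n+1) := by
        rw [pow_succ]; field_simp
    _ ≤ ‖psum (cplx s) (2^(n+1) - 1)‖ / 2^(n+1) := by gcongr

lemma sum_rr_neg_le (m : ℤ) (K : ℕ) (hm : -(2^K) < m) :
    ∑ j ∈ Finset.Icc m 0, sNeg j ≤ 3 := by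
  have hptw : ∀ j ∈ Finset.Icc m 0, sNeg j
      ≤ ∑ i ∈ Finset.range K, (if j = -(2^i : ℤ) then (2/3:ℝ)^i else 0) := by
    intro j hj
    rw [Finset.mem_Icc] at hj
    rw [sNeg]
    simp only [if_pos hj.2]
    rcases eq_or_lt_of_le hj.2 with h0 | hneg
    · subst h0
      rw [rr_zero]
      exact Finset.sum_nonneg (fun i _ => by positivity)
    · by_cases hp : (2 : ℕ) ^ (Nat.log 2 (-j).toNat) = (-j).toNat
      · set L := Nat.log 2 (-j).toNat with hL
        have h2 : ((2^L : ℕ) : ℤ) = (((-j).toNat : ℕ) : ℤ) := congrArg _ hp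
        push_cast at h2
        have hjL : j = -(2^L : ℤ) := by omega
        have hLK : L < K := by
          apply Nat.log_lt_of_lt_pow
          · omega
          · have e : ((2^K : ℕ) : ℤ) = (2:ℤ)^K := by push_cast; ring
            omega
        have h3 := Finset.single_le_sum (f := fun i => (if j = -(2^i : ℤ) then (2/3:ℝ)^i else 0))
          (fun i _ => by positivity) (Finset.mem_range.mpr hLK)
        have h4 : (if j = -(2^L:ℤ) then (2/3:ℝ)^L else 0)
            ≤ ∑ i ∈ Finset.range K, (if j = -(2^i : ℤ) then (2/3:ℝ)^i else 0) := h3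
        rw [if_pos hjL] at h4
        rw [rr_neg_pow_case j hneg hp]
        exact h4
      · rw [rr]
        simp only [not_lt_of_gt hneg, if_neg, hneg.ne, hp]
        simp only [hneg.ne, if_neg, not_lt.mpr hneg.le, if_false, hp, if_false]
        exact Finset.sum_nonneg (fun i _ => by positivity)
  calc ∑ j ∈ Finset.Icc m 0, sNeg j
      ≤ ∑ j ∈ Finset.Icc m 0, ∑ i ∈ Finset.range K,
          (if j = -(2^i : ℤ) then (2/3:ℝ)^i else 0) := Finset.sum_le_sum hptw
    _ = ∑ i ∈ Finset.range K, ∑ j ∈ Finset.Icc m 0,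
          (if j = -(2^i : ℤ) then (2/3:ℝ)^i else 0) := Finset.sum_comm
    _ ≤ ∑ i ∈ Finset.range K, (2/3:ℝ)^i := by
        apply Finset.sum_le_sum
        intro i _
        rw [Finset.sum_ite_eq' (Finset.Icc m 0) (-(2^i:ℤ)) (fun _ => (2/3:ℝ)^i)]
        split_ifs with h
        · exact le_rfl
        · positivity
    _ ≤ 3 := by
        rw [geom_sum_eq (by norm_num)]
        have h0 : (0:ℝ) ≤ (2/3)^K := by positivity
        rw [div_le_iff_of_neg (by norm_num)]
        linarith

lemma sNeg_nonneg (j : ℤ) : 0 ≤ sNeg j := by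
  rw [sNeg]; split_ifs
  · exact rr_nonneg j
  · exact le_rfl

lemma hatAvg_neg_up (k : ℕ) : hatAvg (cplx sNeg) k ≤ ENNReal.ofReal (3 / 2^k) := by
  rw [hatAvg]
  refine iSup₂_le fun m hm => ?_
  obtain ⟨h1, h2⟩ := hm
  apply ENNReal.ofReal_le_ofReal
  have hk0 : (0:ℤ) < 2^k := by positivity
  rcases lt_trichotomy m 0 with hneg | h0 | hposm
  · have hmin : min m 0 = m := min_eq_left hneg.le
    have hmax : max m 0 = (0:ℤ) := max_eq_right hneg.le
    rw [norm_psum_cplx, hmin, hmax]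
    have habs : |m| = -m := abs_of_neg hneg
    have hK : -(2^(k+1)) < m := by omega
    have hs3 := sum_rr_neg_le m (k+1) hK
    have hsnn : (0:ℝ) ≤ ∑ j ∈ Finset.Icc m 0, sNeg j :=
      Finset.sum_nonneg fun j _ => sNeg_nonneg j
    rw [abs_of_nonneg hsnn]
    have hden : (2:ℝ)^k ≤ (m.natAbs : ℝ) + 1 := by
      have hi : (2:ℤ)^k ≤ (m.natAbs : ℤ) := by omega
      have hi2 : ((2^k : ℕ) : ℤ) ≤ (m.natAbs : ℤ) := by push_cast; omega
      have h' : (2^k : ℕ) ≤ m.natAbs := by exact_mod_cast hi2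
      have h'' : ((2^k : ℕ) : ℝ) ≤ (m.natAbs : ℝ) := by exact_mod_cast h'
      push_cast at h''
      linarith
    exact div_le_div₀ (by norm_num) hs3 (by positivity) hden
  · exfalso; subst h0; simp at h1; omega
  · have hmin : min m 0 = (0:ℤ) := min_eq_right hposm.le
    have hmax : max m 0 = m := max_eq_left hposm.le
    rw [norm_psum_cplx, hmin, hmax]
    have hsz : ∑ j ∈ Finset.Icc (0:ℤ) m, sNeg j = 0 := by
      apply Finset.sum_eq_zero
      intro j hj
      rw [Finset.mem_Icc] at hj
      rw [sNeg]
      rcases eq_or_lt_of_le hj.1 with h | h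
      · rw [← h]; simp [rr_zero]
      · simp [not_le.mpr h]
    rw [hsz]
    simp
    positivity

lemma rpow_piece (k n : ℕ) :
    min 1 ((2:ℝ≥0∞) ^ ((k:ℝ) - (n:ℝ))) * ENNReal.ofReal (3/2^k)
      ≤ ENNReal.ofReal (3/2^n) := by
  have h2 : ((2:ℝ≥0∞) ^ ((k:ℝ) - (n:ℝ))) = ENNReal.ofReal ((2:ℝ) ^ ((k:ℝ) - (n:ℝ))) := by
    rw [← ENNReal.ofReal_rpow_of_pos (by norm_num : (0:ℝ) < 2)]
    norm_num
  calc min 1 ((2:ℝ≥0∞) ^ ((k:ℝ) - (n:ℝ))) * ENNReal.ofReal (3/2^k)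
      ≤ ((2:ℝ≥0∞) ^ ((k:ℝ) - (n:ℝ))) * ENNReal.ofReal (3/2^k) :=
        mul_le_mul_left (min_le_right _ _) _
    _ = ENNReal.ofReal ((2:ℝ) ^ ((k:ℝ) - (n:ℝ)) * (3/2^k)) := by
        rw [h2, ← ENNReal.ofReal_mul (by positivity)]
    _ = ENNReal.ofReal (3/2^n) := by
        congr 1
        rw [Real.rpow_sub (by norm_num), Real.rpow_natCast, Real.rpow_natCast]
        field_simp

/-! ### main positive lemma -/

lemma gmbar_main (s : ℤ → ℝ) (hs0 : ∀ j, 0 ≤ s j)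
    (hblock : ∀ n : ℕ, ∀ j : ℤ, (2:ℤ)^n ≤ j → j ≤ 2^(n+1) - 1 → s j = (2/3:ℝ)^n)
    (hTheta : ∀ n, Theta (cplx s) n ≤ 3 * (2/3:ℝ)^n) : GMBarWith 6 (cplx s) := by
  intro n
  have hkey : ENNReal.ofReal ((2/3:ℝ)^n / 2)
      ≤ ⨆ k : ℕ, min 1 ((2:ℝ≥0∞)^((k:ℝ)-(n:ℝ))) * hatAvg (cplx s) k := by
    refine le_trans ?_ (le_iSup _ n)
    rw [sub_self, ENNReal.rpow_zero, min_self, one_mul]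
    exact hatAvg_low s hs0 n (hblock n)
  calc ENNReal.ofReal (Theta (cplx s) n)
      ≤ ENNReal.ofReal (6 * ((2/3:ℝ)^n / 2)) := by
        apply ENNReal.ofReal_le_ofReal
        have := hTheta n
        linarith
    _ = ENNReal.ofReal 6 * ENNReal.ofReal ((2/3:ℝ)^n/2) := ENNReal.ofReal_mul (by norm_num)
    _ ≤ _ := mul_le_mul_right hkey _

/-- The one-sided sequence supported on `k ≤ 0` fails `GM-bar`, the one-sided
sequence supported on `k ≥ 0` satisfies `GM-bar`, yet the full two-sided
sequence satisfies `GM-bar`. -/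
theorem two_sided_compensation :
    ¬ GMBar (fun k => if k ≤ 0 then cTwoSided k else 0) ∧
    GMBar (fun k => if 0 ≤ k then cTwoSided k else 0) ∧
    GMBar cTwoSided := by
  have eNeg : (fun k : ℤ => if k ≤ 0 then cTwoSided k else 0) = cplx sNeg := by
    funext k
    rw [c_eq, cplx, sNeg]
    split_ifs <;> simp
  have ePos : (fun k : ℤ => if 0 ≤ k then cTwoSided k else 0) = cplx sPos := by
    funext k
    rw [c_eq, cplx, sPos]
    split_ifs <;> simp
  have eFull : cTwoSided = cplx rr := funext fun k => c_eq k
  refine ⟨?_, ?_, ?_⟩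
  · -- negative side fails
    rw [eNeg]
    rintro ⟨C, hC, hGM⟩
    have hsup : ∀ n : ℕ, (⨆ k : ℕ, min 1 ((2:ℝ≥0∞)^((k:ℝ)-(n:ℝ))) * hatAvg (cplx sNeg) k)
        ≤ ENNReal.ofReal (3/2^n) := fun n =>
      iSup_le fun k => le_trans (mul_le_mul_right (hatAvg_neg_up k) _) (rpow_piece k n)
    obtain ⟨N, hN⟩ := pow_unbounded_of_one_lt (3 * C) (by norm_num : (1:ℝ) < 4/3)
    have h1 := hGM (N + 2)
    have h2 : ENNReal.ofReal (Theta (cplx sNeg) (N+2)) ≤ ENNReal.ofReal (C * (3/2^(N+2))) := by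
      refine le_trans h1 ?_
      rw [ENNReal.ofReal_mul hC.le]
      exact mul_le_mul_right (hsup (N+2)) _
    rw [ENNReal.ofReal_le_ofReal_iff (by positivity)] at h2
    have h4 := Theta_neg_low N
    have hx : (0:ℝ) < (2/3)^N := by positivity
    have hpp : (0:ℝ) < (2:ℝ)^N := by positivity
    have e1 : (2:ℝ)^(N+2) = 4 * 2^N := by ring
    have e2 : (2/3:ℝ)^(N+1) = 2/3 * (2/3)^N := by ring
    have e3 : (4/3:ℝ)^N = (2/3)^N * 2^N := by
      rw [← mul_pow]; norm_num
    rw [e1] at h2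
    rw [e2] at h4
    rw [e3] at hN
    have h5 : 2/3 * (2/3:ℝ)^N ≤ C * (3 / (4 * 2^N)) := le_trans h4 h2
    have h6 : 2/3 * (2/3:ℝ)^N * (4 * 2^N) ≤ 3 * C := by
      rw [show C * (3 / (4 * 2^N)) = 3 * C / (4 * 2^N) by ring] at h5
      rw [← le_div_iff₀ (by positivity)]
      exact h5
    nlinarith [mul_pos hx hpp]
  · -- positive side satisfies
    rw [ePos]
    refine ⟨6, by norm_num, gmbar_main sPos ?_ ?_ ?_⟩
    · intro j
      rw [sPos]; split_ifs
      · exact rr_nonneg j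
      · exact le_rfl
    · intro n j hj1 hj2
      have hp : (0:ℤ) < 2^n := by positivity
      rw [sPos]
      simp only [if_pos (by omega : (0:ℤ) ≤ j)]
      exact rr_pos_val n j hj1 (by omega)
    · intro n
      match n with
      | 0 =>
        rw [Theta_aPos_zero]; norm_num
      | (N+1) =>
        rw [Theta_aPos_succ N, show (2/3:ℝ)^(N+1) = 2/3 * (2/3)^N by ring]
        have : (0:ℝ) ≤ (2/3)^N := by positivity
        linarith
  · -- full sequence satisfies
    rw [eFull]
    refine ⟨6, by norm_num, gmbar_main rr rr_nonneg ?_ ?_⟩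
    · intro n j hj1 hj2
      have hp : (0:ℤ) < 2^n := by positivity
      exact rr_pos_val n j hj1 (by omega)
    · intro n
      match n with
      | 0 => rw [Theta_full_zero]; norm_num
      | 1 => rw [Theta_full_one]; norm_num
      | (N+2) =>
        rw [Theta_full_succ N, show (2/3:ℝ)^(N+2) = 2/3 * (2/3)^(N+1) by ring]
        have : (0:ℝ) ≤ (2/3)^(N+1) := by positivity
        linarith
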